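/- Let n ≥ 1, M ≥ 1, block sizes N₁,…,N_M ≥ 1 with ∑_j N_j = N, and β₁,…,β_M ∈ ℂ. Let B be the N×N block-diagonal Jordan matrix with blocks J_{N_j}(β_j), indexed by pairs (j,ν) with 1 ≤ ν ≤ N_j. Let A(B) be the n×N matrix with entries A(B)_{a,(j,ν)} = C(n−a, ν−1) · β_j^{n−a−ν+1} when ν ≤ n−a+1 and 0 otherwise (1 ≤ a ≤ n). Let f ∈ ℂⁿ have entries f_a = δ_{a,1} and g ∈ ℂᴺ have entries g_{(j,ν)} = δ_{ν,1}. Then A(B)·B − Λ_nᵀ·A(B) = f·(gᵀ·Bⁿ), i.e. the matrix A(B)·B − Λ_nᵀ·A(B) has all rows zero except the first, which equals the row vector gᵀ·Bⁿ. -/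

import Mathlib

open Matrix BigOperators

/-- The `n × n` upper-triangular shift matrix `Λ_n`. -/
def shiftMat (n : ℕ) : Matrix (Fin n) (Fin n) ℂ :=
  Matrix.of fun a b => if (b : ℕ) = (a : ℕ) + 1 then 1 else 0

/-- The block-diagonal Jordan matrix with blocks `J_{sz j}(ev j)`. -/
def blockJordan {M : ℕ} (sz : Fin M → ℕ) (ev : Fin M → ℂ) :
    Matrix ((j : Fin M) × Fin (sz j)) ((j : Fin M) × Fin (sz j)) ℂ :=
  Matrix.of fun p q =>
    if p.1 = q.1 then
      (if (p.2 : ℕ) = (q.2 : ℕ) then ev p.1 else 0)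
        + (if (q.2 : ℕ) = (p.2 : ℕ) + 1 then 1 else 0)
    else 0

def predIdx {M : ℕ} {sz : Fin M → ℕ} (q : (j : Fin M) × Fin (sz j)) :
    (j : Fin M) × Fin (sz j) :=
  ⟨q.1, ⟨(q.2 : ℕ) - 1, lt_of_le_of_lt (Nat.sub_le _ _) q.2.isLt⟩⟩

lemma blockJordan_decomp {M : ℕ} (sz : Fin M → ℕ) (ev : Fin M → ℂ)
    (r q : (j : Fin M) × Fin (sz j)) :
    blockJordan sz ev r q =
      (if r = q then ev q.1 else 0) +
      (if (q.2 : ℕ) ≠ 0 ∧ r = predIdx q then 1 else 0) := by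
  obtain ⟨rj, rv⟩ := r
  obtain ⟨qj, qv⟩ := q
  simp only [blockJordan, predIdx, Matrix.of_apply]
  by_cases hj : rj = qj
  · subst hj
    simp only [if_pos rfl]
    congr 1 <;>
      · simp only [Sigma.mk.inj_iff, heq_eq_eq, true_and, Fin.ext_iff]
        split_ifs <;> first | rfl | omega
  · simp [Sigma.mk.inj_iff, hj]

lemma mul_blockJordan_apply {α : Type*} {M : ℕ} (sz : Fin M → ℕ) (ev : Fin M → ℂ)
    (A : Matrix α ((j : Fin M) × Fin (sz j)) ℂ) (a : α)
    (q : (j : Fin M) × Fin (sz j)) :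
    (A * blockJordan sz ev) a q
      = ev q.1 * A a q + (if (q.2 : ℕ) = 0 then 0 else A a (predIdx q)) := by
  rw [Matrix.mul_apply]
  simp only [blockJordan_decomp, mul_add, mul_ite, mul_one, mul_zero]
  rw [Finset.sum_add_distrib]
  congr 1
  · rw [Finset.sum_ite_eq' Finset.univ q (fun r => A a r * ev q.1)]
    simp [mul_comm]
  · by_cases h0 : (q.2 : ℕ) = 0
    · simp [h0]
    · simp only [h0, if_false, ne_eq, not_false_iff, true_and]
      rw [Finset.sum_ite_eq' Finset.univ (predIdx q) (fun r => A a r)]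
      simp

lemma gpascal (x : ℂ) (k μ ν : ℕ) :
    x * (if μ ≤ ν then ((k.choose (ν - μ)) : ℂ) * x ^ (k - (ν - μ)) else 0)
      + (if ν ≠ 0 ∧ μ ≤ ν - 1 then ((k.choose (ν - 1 - μ)) : ℂ) * x ^ (k - (ν - 1 - μ)) else 0)
      = if μ ≤ ν then (((k+1).choose (ν - μ)) : ℂ) * x ^ (k + 1 - (ν - μ)) else 0 := by
  rcases Nat.lt_or_ge ν μ with h | h
  · rw [if_neg (by omega), if_neg (by omega), if_neg (by omega)]
    ring
  · rw [if_pos h, if_pos h]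
    set d := ν - μ with hd
    rcases Nat.eq_zero_or_pos d with hd0 | hd0
    · rw [if_neg (by omega), hd0]
      simp [pow_succ]
      ring
    · rw [if_pos (by omega)]
      have h1 : ν - 1 - μ = d - 1 := by omega
      rw [h1]
      rcases Nat.lt_or_ge k (d - 1) with hk | hk
      · rw [Nat.choose_eq_zero_of_lt (by omega), Nat.choose_eq_zero_of_lt (by omega),
          Nat.choose_eq_zero_of_lt (by omega)]
        ring
      · have h2 : k - (d - 1) = k + 1 - d := by omega
        rw [h2]
        have h3 : d = (d - 1) + 1 := by omega
        have hchn : (k+1).choose d = k.choose (d-1) + k.choose d := by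
          conv_lhs => rw [h3]
          rw [Nat.choose_succ_succ, Nat.succ_eq_add_one, ← h3]
        rw [show (((k+1).choose d : ℕ) : ℂ) = ((k.choose (d-1) : ℕ) : ℂ) + ((k.choose d : ℕ) : ℂ) by
          rw [hchn]; push_cast; ring]
        rcases Nat.lt_or_ge k d with hkd | hkd
        · rw [Nat.choose_eq_zero_of_lt hkd]
          have : k + 1 - d = 0 := by omega
          ring
        · have h4 : k + 1 - d = (k - d) + 1 := by omega
          rw [h4, pow_succ]
          ring

lemma blockJordan_pow_apply {M : ℕ} (sz : Fin M → ℕ) (ev : Fin M → ℂ) (k : ℕ)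
    (p q : (j : Fin M) × Fin (sz j)) :
    (blockJordan sz ev ^ k) p q
      = if p.1 = q.1 ∧ (p.2 : ℕ) ≤ (q.2 : ℕ) then
          ((k.choose ((q.2 : ℕ) - (p.2 : ℕ))) : ℂ)
            * ev p.1 ^ (k - ((q.2 : ℕ) - (p.2 : ℕ)))
        else 0 := by
  induction k generalizing q with
  | zero =>
    rw [pow_zero, Matrix.one_apply]
    obtain ⟨pj, pv⟩ := p
    obtain ⟨qj, qv⟩ := q
    by_cases hj : pj = qj
    · subst hj
      simp only [Sigma.mk.inj_iff, heq_eq_eq, true_and, Fin.ext_iff]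
      by_cases hv : (pv : ℕ) = (qv : ℕ)
      · rw [if_pos hv, if_pos (by omega)]
        simp [hv]
      · rw [if_neg hv]
        by_cases hle : (pv : ℕ) ≤ (qv : ℕ)
        · rw [if_pos hle, Nat.choose_eq_zero_of_lt (by omega)]
          simp
        · rw [if_neg hle]
    · rw [if_neg (by simp [Sigma.mk.inj_iff, hj]), if_neg (by simp [hj])]
  | succ k ih =>
    rw [pow_succ, mul_blockJordan_apply, ih q, ih (predIdx q)]
    by_cases hj : p.1 = q.1
    · have hj' : p.1 = (predIdx q).1 := hj
      have hev : ev q.1 = ev p.1 := by rw [hj]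
      have hp2 : ((predIdx q).2 : ℕ) = (q.2 : ℕ) - 1 := rfl
      simp only [hj, hj', hp2, true_and, hev]
      have hmain := gpascal (ev p.1) k (p.2 : ℕ) (q.2 : ℕ)
      rw [← hmain]
      congr 1
      by_cases h0 : (q.2 : ℕ) = 0
      · simp [h0]
      · simp [h0, predIdx]
    · have hj' : ¬ p.1 = (predIdx q).1 := hj
      simp only [hj, hj', false_and, if_false, mul_zero, zero_add, add_zero, ite_self]

lemma shiftT_mul_apply {n : ℕ} {κ : Type*} [Fintype κ] (A : Matrix (Fin n) κ ℂ)
    (a : Fin n) (q : κ) :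
    ((shiftMat n)ᵀ * A) a q
      = if h : (a : ℕ) = 0 then 0
        else A ⟨(a : ℕ) - 1, lt_of_le_of_lt (Nat.sub_le _ _) a.isLt⟩ q := by
  rw [Matrix.mul_apply]
  split_ifs with h
  · apply Finset.sum_eq_zero
    intro b _
    simp only [shiftMat, Matrix.transpose_apply, Matrix.of_apply]
    rw [if_neg (by omega)]
    ring
  · rw [show (∑ b, (shiftMat n)ᵀ a b * A b q)
        = ∑ b, (if b = (⟨(a : ℕ) - 1, lt_of_le_of_lt (Nat.sub_le _ _) a.isLt⟩ : Fin n)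
            then A b q else 0) from ?_]
    · rw [Finset.sum_ite_eq' Finset.univ _ (fun b => A b q)]
      simp
    · apply Finset.sum_congr rfl
      intro b _
      simp only [shiftMat, Matrix.transpose_apply, Matrix.of_apply, Fin.ext_iff]
      split_ifs with h1 h2 h2 <;> first | (exfalso; omega) | rw [one_mul] | rw [zero_mul]

lemma vecMul_pow_apply {M : ℕ} (sz : Fin M → ℕ) (hsz : ∀ j, 1 ≤ sz j) (ev : Fin M → ℂ)
    (n : ℕ) (q : (j : Fin M) × Fin (sz j)) :
    Matrix.vecMul (fun p : (j : Fin M) × Fin (sz j) => if (p.2 : ℕ) = 0 then (1 : ℂ) else 0)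
        (blockJordan sz ev ^ n) q
      = ((n.choose (q.2 : ℕ)) : ℂ) * ev q.1 ^ (n - (q.2 : ℕ)) := by
  rw [Matrix.vecMul]
  show (∑ p, (if ((p.2 : ℕ) = 0) then (1:ℂ) else 0) * (blockJordan sz ev ^ n) p q) = _
  have hz : (0 : ℕ) < sz q.1 := hsz q.1
  set z : (j : Fin M) × Fin (sz j) := ⟨q.1, ⟨0, hz⟩⟩ with hzdef
  rw [show (∑ p, (if ((p.2 : ℕ) = 0) then (1:ℂ) else 0) * (blockJordan sz ev ^ n) p q)
      = ∑ p, (if p = z then ((n.choose (q.2 : ℕ)) : ℂ) * ev q.1 ^ (n - (q.2 : ℕ)) else 0)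
      from ?_]
  · rw [Finset.sum_ite_eq' Finset.univ z _]
    simp
  · apply Finset.sum_congr rfl
    intro p _
    rw [blockJordan_pow_apply]
    by_cases hp : p = z
    · subst hp
      have hz0 : ((z.2 : ℕ)) = 0 := rfl
      have hz1 : z.1 = q.1 := rfl
      simp only [hz0, hz1, Nat.zero_le, if_true, Nat.sub_zero, and_true, one_mul]
    · by_cases h2 : (p.2 : ℕ) = 0
      · rw [if_pos h2, if_neg hp, one_mul, if_neg]
        rintro ⟨hj, -⟩
        apply hp
        obtain ⟨pj, pv⟩ := p
        obtain ⟨qj, qv⟩ := q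
        simp only at hj
        subst hj
        simp only [hzdef, Sigma.mk.inj_iff, heq_eq_eq, true_and]
        exact Fin.ext h2
      · rw [if_neg h2, if_neg hp, zero_mul]

lemma guard_choose (x : ℂ) (m ν : ℕ) :
    (if ν ≤ m then ((m.choose ν) : ℂ) * x ^ (m - ν) else 0)
      = ((m.choose ν) : ℂ) * x ^ (m - ν) := by
  split_ifs with h
  · rfl
  · rw [Nat.choose_eq_zero_of_lt (by omega)]
    simp

/-- With `B` the block-diagonal Jordan matrix with blocks `J_{N_j}(β_j)` and
`A(B)_{a,(j,ν)} = C(n−a, ν−1)·β_j^{n−a−ν+1}` when `ν ≤ n−a+1`, else `0` (`1`-based; here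
`0`-based: `C(n−1−a, ν)·β_j^{n−1−a−ν}` when `ν ≤ n−1−a`), `f_a = δ_{a,1}`,
`g_{(j,ν)} = δ_{ν,1}`: `A(B)·B − Λ_nᵀ·A(B) = f·(gᵀ·Bⁿ)`. -/
theorem stmt11 (n M : ℕ) (hn : 0 < n) (hM : 0 < M)
    (Nsz : Fin M → ℕ) (hNsz : ∀ j, 1 ≤ Nsz j) (β : Fin M → ℂ)
    (AB : Matrix (Fin n) ((j : Fin M) × Fin (Nsz j)) ℂ)
    (hAB : AB = Matrix.of fun (a : Fin n) (q : (j : Fin M) × Fin (Nsz j)) =>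
      if (q.2 : ℕ) ≤ n - 1 - (a : ℕ) then
        (Nat.choose (n - 1 - (a : ℕ)) (q.2 : ℕ) : ℂ)
          * β q.1 ^ (n - 1 - (a : ℕ) - (q.2 : ℕ))
      else 0) :
    AB * blockJordan Nsz β - (shiftMat n)ᵀ * AB
      = Matrix.vecMulVec (fun (a : Fin n) => if (a : ℕ) = 0 then (1 : ℂ) else 0)
          (Matrix.vecMul
            (fun q : (j : Fin M) × Fin (Nsz j) => if (q.2 : ℕ) = 0 then (1 : ℂ) else 0)
            (blockJordan Nsz β ^ n)) := by
  subst hAB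
  ext a q
  rw [Matrix.sub_apply, mul_blockJordan_apply, shiftT_mul_apply, Matrix.vecMulVec_apply,
    vecMul_pow_apply Nsz hNsz]
  simp only [Matrix.of_apply]
  simp only [show ((predIdx q).2 : ℕ) = (q.2 : ℕ) - 1 from rfl, show (predIdx q).1 = q.1 from rfl]
  set ν := (q.2 : ℕ) with hν
  set x := β q.1 with hx
  have key := gpascal x (n - 1 - (a : ℕ)) 0 ν
  simp only [Nat.zero_le, if_true, Nat.sub_zero, ne_eq, Nat.zero_le, and_true] at key
  rw [guard_choose, guard_choose, guard_choose] at *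
  by_cases ha : (a : ℕ) = 0
  · rw [dif_pos ha, if_pos ha, sub_zero, one_mul, ha]
    rw [ha] at key
    have hm : n - 1 - 0 + 1 = n := by omega
    rw [hm] at key
    rw [← key]
    congr 1
    by_cases h0 : ν = 0
    · simp [h0]
    · simp [h0]
  · rw [dif_neg ha, if_neg ha, zero_mul]
    have hm : n - 1 - ((a : ℕ) - 1) = (n - 1 - (a : ℕ)) + 1 := by
      have := a.isLt
      omega
    rw [hm]
    rw [← key]
    have : (if ν = 0 then (0:ℂ) else ((n - 1 - (a:ℕ)).choose (ν-1) : ℂ) * x ^ (n - 1 - (a:ℕ) - (ν-1)))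
        = (if ¬ν = 0 then ((n - 1 - (a:ℕ)).choose (ν-1) : ℂ) * x ^ (n - 1 - (a:ℕ) - (ν-1)) else 0) := by
      by_cases h0 : ν = 0 <;> simp [h0]
    rw [this]
    ring
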